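/- Fix n ≥ 3 and let G = ℤ/2ℤ × ℤ/2ℤ = ⟨a⟩ × ⟨b⟩. Define the n-Cayley digraph Γ on G × ℤ/nℤ with T_{i,i+1} = T_{i+1,i} = {1} for i ∈ ℤ/nℤ \ {0,1}, T_{0,1} = {1}, T_{1,0} = {a}, T_{1,2} = {b}, T_{2,1} = {a}, and all other T_{j,k} = ∅. Then Aut(Γ) is exactly the group of right translations by G, so ℤ/2ℤ × ℤ/2ℤ admits an n-partite digraphical representation for every n ≥ 3. -/

import Mathlib

namespace PDR

/-- `σ` is an automorphism of the digraph `D`. -/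
def IsDigraphAut {V : Type*} (D : Digraph V) (σ : Equiv.Perm V) : Prop :=
  ∀ u v : V, D.Adj (σ u) (σ v) ↔ D.Adj u v

/-- The automorphism group of a digraph, as a subgroup of the symmetric group. -/
def digraphAut {V : Type*} (D : Digraph V) : Subgroup (Equiv.Perm V) where
  carrier := {σ | IsDigraphAut D σ}
  one_mem' := by intro u v; simp
  mul_mem' := by
    intro σ τ hσ hτ u v
    simpa [Equiv.Perm.mul_apply] using (hσ (τ u) (τ v)).trans (hτ u v)
  inv_mem' := by
    intro σ hσ u v
    simpa using (hσ (σ⁻¹ u) (σ⁻¹ v)).symm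

/-- A digraph is regular if all vertices have the same out-valency and in-valency. -/
def IsRegularDigraph {V : Type*} (D : Digraph V) : Prop :=
  ∃ d : ℕ, ∀ v : V, {u | D.Adj v u}.ncard = d ∧ {u | D.Adj u v}.ncard = d

/-- `D` is an `n`-partite digraphical representation of `G`: `D` is regular,
`Aut(D) ≅ G`, `Aut(D)` is semiregular with exactly `n` orbits, and each orbit
induces an empty sub-digraph. -/
def IsNPDR (G : Type*) [Group G] (n : ℕ) {V : Type*} (D : Digraph V) : Prop :=
  IsRegularDigraph D ∧
  Nonempty (G ≃* digraphAut D) ∧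
  (∀ σ ∈ digraphAut D, ∀ v : V, σ v = v → σ = 1) ∧
  (∃ f : V → Fin n, Function.Surjective f ∧
     ∀ u v : V, f u = f v ↔ ∃ σ ∈ digraphAut D, σ u = v) ∧
  (∀ u v : V, (∃ σ ∈ digraphAut D, σ u = v) → ¬ D.Adj u v)

/-- The `n`-Cayley digraph of `G` with connection sets `T i j`:
arcs `(g,i) → (t*g, j)` for `t ∈ T i j`. -/
def nCay (G : Type*) [Group G] (n : ℕ) (T : ZMod n → ZMod n → Set G) :
    Digraph (G × ZMod n) where
  Adj p q := q.1 * p.1⁻¹ ∈ T p.2 q.2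

/-- Right translation `(x, i) ↦ (x·g, i)`. -/
def rtransl (G : Type*) [Group G] (n : ℕ) (g : G) : Equiv.Perm (G × ZMod n) :=
  (Equiv.mulRight g).prodCongr (Equiv.refl (ZMod n))


/-- The group `ℤ/2ℤ × ℤ/2ℤ` (written multiplicatively) and its generators. -/
abbrev GV4 := Multiplicative (ZMod 2 × ZMod 2)
def aV4 : GV4 := Multiplicative.ofAdd (1, 0)
def bV4 : GV4 := Multiplicative.ofAdd (0, 1)

/-- Connection sets: `T i (i+1) = T (i+1) i = {1}` for `i ∉ {0,1}`, `T 0 1 = {1}`,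
`T 1 0 = {a}`, `T 1 2 = {b}`, `T 2 1 = {a}`, all others empty. -/
def T6 (n : ℕ) : ZMod n → ZMod n → Set GV4 := fun i j =>
  if (j = i + 1 ∧ i ≠ 0 ∧ i ≠ 1) ∨ (i = j + 1 ∧ j ≠ 0 ∧ j ≠ 1) then {1}
  else if i = 0 ∧ j = 1 then {1}
  else if i = 1 ∧ j = 0 then {aV4}
  else if i = 1 ∧ j = 2 then {bV4}
  else if i = 2 ∧ j = 1 then {aV4}
  else ∅

/-! ### Auxiliary material for statement 6 -/

section S6Aux

variable {n : ℕ}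

private lemma h10 (hn : 3 ≤ n) : (1 : ZMod n) ≠ 0 := by
  have : ((1:ℕ) : ZMod n) ≠ 0 := by
    rw [Ne, ZMod.natCast_eq_zero_iff]
    intro h; have := Nat.le_of_dvd (by norm_num) h; omega
  simpa using this

private lemma h20 (hn : 3 ≤ n) : (2 : ZMod n) ≠ 0 := by
  have : ((2:ℕ) : ZMod n) ≠ 0 := by
    rw [Ne, ZMod.natCast_eq_zero_iff]
    intro h; have := Nat.le_of_dvd (by norm_num) h; omega
  simpa using this

private lemma h21 (hn : 3 ≤ n) : (2 : ZMod n) ≠ 1 :=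
  fun h => h10 hn (by linear_combination h)

private lemma h31 (hn : 3 ≤ n) : (3 : ZMod n) ≠ 1 :=
  fun h => h20 hn (by linear_combination h)

/-- The full description of adjacency in our digraph. -/
private lemma adj_iff (hn : 3 ≤ n) {g h : GV4} {i j : ZMod n} :
    (nCay GV4 n (T6 n)).Adj (g, i) (h, j) ↔
      (h = g ∧ ((j = i + 1 ∧ i ≠ 0 ∧ i ≠ 1) ∨ (i = j + 1 ∧ j ≠ 0 ∧ j ≠ 1) ∨ (i = 0 ∧ j = 1))) ∨
      (h = aV4 * g ∧ ((i = 1 ∧ j = 0) ∨ (i = 2 ∧ j = 1))) ∨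
      (h = bV4 * g ∧ i = 1 ∧ j = 2) := by
  have e10 := h10 hn; have e20 := h20 hn; have e21 := h21 hn; have e31 := h31 hn
  show h * g⁻¹ ∈ T6 n i j ↔ _
  unfold T6
  split_ifs with c1 c2 c3 c4 c5 <;>
    simp only [Set.mem_singleton_iff, mul_inv_eq_iff_eq_mul, one_mul,
      Set.mem_empty_iff_false, false_iff]
  · -- main line: T = {1}
    constructor
    · rintro rfl
      rcases c1 with c | c
      · exact Or.inl ⟨rfl, Or.inl c⟩
      · exact Or.inl ⟨rfl, Or.inr (Or.inl c)⟩
    · rintro (⟨rfl, _⟩ | ⟨rfl, (⟨hi, hj⟩ | ⟨hi, hj⟩)⟩ | ⟨rfl, hi, hj⟩)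
      · rfl
      · exfalso; subst hi; subst hj
        rcases c1 with ⟨e, _, _⟩ | ⟨_, e, _⟩
        · exact e20 (by linear_combination -e)
        · exact e rfl
      · exfalso; subst hi; subst hj
        rcases c1 with ⟨e, _, _⟩ | ⟨_, _, e⟩
        · exact e31 (by linear_combination -e)
        · exact e rfl
      · exfalso; subst hi; subst hj
        rcases c1 with ⟨_, _, e⟩ | ⟨e, _, _⟩
        · exact e rfl
        · exact e31 (by linear_combination -e)
  · -- T 0 1 = {1}
    obtain ⟨hi, hj⟩ := c2
    constructor
    · rintro rfl; exact Or.inl ⟨rfl, Or.inr (Or.inr ⟨hi, hj⟩)⟩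
    · rintro (⟨rfl, _⟩ | ⟨rfl, (⟨hi', _⟩ | ⟨hi', _⟩)⟩ | ⟨rfl, hi', _⟩)
      · rfl
      · exact absurd (hi ▸ hi') e10.symm
      · exfalso; rw [hi] at hi'; exact e20 (by linear_combination hi'.symm)
      · exact absurd (hi ▸ hi') e10.symm
  · -- T 1 0 = {a}
    obtain ⟨hi, hj⟩ := c3
    constructor
    · rintro rfl; exact Or.inr (Or.inl ⟨rfl, Or.inl ⟨hi, hj⟩⟩)
    · rintro (⟨rfl, (⟨e, _, e'⟩ | ⟨e, e', _⟩ | ⟨e, e'⟩)⟩ | ⟨rfl, _⟩ | ⟨rfl, _, e⟩)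
      · exfalso; rw [hi, hj] at e; exact e20 (by linear_combination -e)
      · exact absurd hj e'
      · rw [hi] at e; exact (e10 e).elim
      · rfl
      · exfalso; rw [hj] at e; exact e20 (by linear_combination e.symm)
  · -- T 1 2 = {b}
    obtain ⟨hi, hj⟩ := c4
    constructor
    · rintro rfl; exact Or.inr (Or.inr ⟨rfl, hi, hj⟩)
    · rintro (⟨rfl, (⟨_, _, e⟩ | ⟨e, _, _⟩ | ⟨e, _⟩)⟩ | ⟨rfl, (⟨_, e⟩ | ⟨e, _⟩)⟩ | ⟨rfl, _⟩)
      · exact absurd hi e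
      · exfalso; rw [hi, hj] at e; exact e31 (by linear_combination -e)
      · rw [hi] at e; exact (e10 e).elim
      · exfalso; rw [hj] at e; exact e20 e
      · exfalso; rw [hi] at e; exact e21 (by linear_combination e.symm)
      · rfl
  · -- T 2 1 = {a}
    obtain ⟨hi, hj⟩ := c5
    constructor
    · rintro rfl; exact Or.inr (Or.inl ⟨rfl, Or.inr ⟨hi, hj⟩⟩)
    · rintro (⟨rfl, (⟨e, _, _⟩ | ⟨_, _, e⟩ | ⟨e, _⟩)⟩ | ⟨rfl, (⟨e, _⟩ | _)⟩ | ⟨rfl, e, _⟩)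
      · exfalso; rw [hi, hj] at e; exact e31 (by linear_combination -e)
      · exact absurd hj e
      · exfalso; rw [hi] at e; exact e20 e
      · exfalso; rw [hi] at e; exact e21 e
      · rfl
      · exfalso; rw [hi] at e; exact e21 e
  · -- empty case
    rintro (⟨_, (c | c | c)⟩ | ⟨_, (c | c)⟩ | ⟨_, c⟩)
    · exact c1 (Or.inl c)
    · exact c1 (Or.inr c)
    · exact c2 c
    · exact c3 c
    · exact c5 c
    · exact c4 c

/-- Digons (pairs of opposite arcs). -/
private def IsDigon (n : ℕ) (u v : GV4 × ZMod n) : Prop :=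
  (nCay GV4 n (T6 n)).Adj u v ∧ (nCay GV4 n (T6 n)).Adj v u

private lemma digon_iff (hn : 3 ≤ n) {g h : GV4} {i j : ZMod n} :
    IsDigon n (g, i) (h, j) ↔
      h = g ∧ ((j = i + 1 ∧ i ≠ 0 ∧ i ≠ 1) ∨ (i = j + 1 ∧ j ≠ 0 ∧ j ≠ 1)) := by
  have e10 := h10 hn; have e20 := h20 hn; have e21 := h21 hn
  unfold IsDigon
  rw [adj_iff hn, adj_iff hn]
  constructor
  · rintro ⟨(⟨hA', hA⟩ | ⟨hA', hA⟩ | ⟨hA', hA⟩), (⟨hB', hB⟩ | ⟨hB', hB⟩ | ⟨hB', hB⟩)⟩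
    · -- h = g, g = h
      refine ⟨hA', ?_⟩
      rcases hA with c | c | ⟨hi, hj⟩
      · exact Or.inl c
      · exact Or.inr c
      · exfalso
        rcases hB with ⟨e, _, _⟩ | ⟨_, e, _⟩ | ⟨e, _⟩
        · rw [hi, hj] at e; exact e20 (by linear_combination -e)
        · rw [hi] at e; exact e rfl
        · rw [hj] at e; exact e10 e
    · -- h = g, g = a h
      exfalso
      rw [hA'] at hB'
      exact absurd (mul_eq_right.mp hB'.symm) (by decide)
    · -- h = g, g = b h
      exfalso
      rw [hA'] at hB'
      exact absurd (mul_eq_right.mp hB'.symm) (by decide)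
    · -- h = a g, g = h
      exfalso
      rw [hB'] at hA'
      exact absurd (mul_eq_right.mp hA'.symm) (by decide)
    · -- h = a g, g = a h : layer conditions clash
      exfalso
      rcases hA with ⟨hi, hj⟩ | ⟨hi, hj⟩ <;> rcases hB with ⟨hj', hi'⟩ | ⟨hj', hi'⟩
      · rw [hi] at hi'; exact e10 hi'
      · rw [hj] at hj'; exact e20 (by linear_combination hj'.symm)
      · rw [hi] at hi'; exact e20 hi'
      · rw [hi] at hi'; exact e21 hi'
    · -- h = a g, g = b h
      exfalso
      rw [hA', ← mul_assoc] at hB'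
      exact absurd (mul_eq_right.mp hB'.symm) (by decide)
    · -- h = b g, g = h
      exfalso
      rw [hB'] at hA'
      exact absurd (mul_eq_right.mp hA'.symm) (by decide)
    · -- h = b g, g = a h
      exfalso
      rw [hA', ← mul_assoc] at hB'
      exact absurd (mul_eq_right.mp hB'.symm) (by decide)
    · -- h = b g, g = b h : layers clash
      exfalso
      obtain ⟨hi, hj⟩ := hA
      obtain ⟨hj', hi'⟩ := hB
      rw [hj] at hj'; exact e21 hj'
  · rintro ⟨rfl, hc⟩
    refine ⟨Or.inl ⟨rfl, ?_⟩, Or.inl ⟨rfl, ?_⟩⟩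
    · rcases hc with c | c
      · exact Or.inl c
      · exact Or.inr (Or.inl c)
    · rcases hc with c | c
      · exact Or.inr (Or.inl c)
      · exact Or.inl c


private lemma digon_zero (hn : 3 ≤ n) {g h : GV4} {j : ZMod n} :
    IsDigon n ((g, 0) : GV4 × ZMod n) (h, j) ↔ h = g ∧ j = -1 := by
  rw [digon_iff hn]
  constructor
  · rintro ⟨rfl, (⟨_, e, _⟩ | ⟨e, _, _⟩)⟩
    · exact (e rfl).elim
    · exact ⟨rfl, by linear_combination -e⟩
  · rintro ⟨rfl, rfl⟩
    refine ⟨rfl, Or.inr ⟨by ring, ?_, ?_⟩⟩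
    · intro e; exact h10 hn (by linear_combination -e)
    · intro e; exact h20 hn (by linear_combination -e)

private lemma digon_two (hn : 3 ≤ n) {g h : GV4} {j : ZMod n} :
    IsDigon n ((g, 2) : GV4 × ZMod n) (h, j) ↔ h = g ∧ j = 3 := by
  rw [digon_iff hn]
  constructor
  · rintro ⟨rfl, (⟨e, _, _⟩ | ⟨e, _, e'⟩)⟩
    · exact ⟨rfl, by linear_combination e⟩
    · exact (e' (by linear_combination -e)).elim
  · rintro ⟨rfl, rfl⟩
    exact ⟨rfl, Or.inl ⟨by ring, h20 hn, h21 hn⟩⟩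

private lemma digon_one (hn : 3 ≤ n) {g : GV4} {v : GV4 × ZMod n} :
    ¬ IsDigon n ((g, 1) : GV4 × ZMod n) v := by
  obtain ⟨h, j⟩ := v
  rw [digon_iff hn]
  rintro ⟨_, (⟨_, _, e⟩ | ⟨e, e', _⟩)⟩
  · exact e rfl
  · exact e' (by linear_combination -e)

private lemma digon_mid (hn : 3 ≤ n) {i : ZMod n} (hi0 : i ≠ 0) (hi1 : i ≠ 1) (hi2 : i ≠ 2)
    {g h : GV4} {j : ZMod n} :
    IsDigon n (g, i) (h, j) ↔ h = g ∧ (j = i + 1 ∨ j = i - 1) := by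
  rw [digon_iff hn]
  constructor
  · rintro ⟨rfl, (⟨e, _, _⟩ | ⟨e, _, _⟩)⟩
    · exact ⟨rfl, Or.inl e⟩
    · exact ⟨rfl, Or.inr (by linear_combination -e)⟩
  · rintro ⟨rfl, (rfl | rfl)⟩
    · exact ⟨rfl, Or.inl ⟨rfl, hi0, hi1⟩⟩
    · refine ⟨rfl, Or.inr ⟨by ring, ?_, ?_⟩⟩
      · intro e; exact hi1 (by linear_combination e)
      · intro e; exact hi2 (by linear_combination e)

private lemma digon_map {σ : Equiv.Perm (GV4 × ZMod n)}
    (hσ : IsDigraphAut (nCay GV4 n (T6 n)) σ) {u v : GV4 × ZMod n} :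
    IsDigon n u v → IsDigon n (σ u) (σ v) :=
  fun ⟨h1, h2⟩ => ⟨(hσ u v).mpr h1, (hσ v u).mpr h2⟩

private lemma digon_pull {σ : Equiv.Perm (GV4 × ZMod n)}
    (hσ : IsDigraphAut (nCay GV4 n (T6 n)) σ) {u v : GV4 × ZMod n}
    (h : IsDigon n (σ u) v) : IsDigon n u (σ.symm v) := by
  have h' : IsDigon n (σ u) (σ (σ.symm v)) := by rwa [Equiv.apply_symm_apply]
  exact ⟨(hσ _ _).mp h'.1, (hσ _ _).mp h'.2⟩

private lemma layer_one (hn : 3 ≤ n) {σ : Equiv.Perm (GV4 × ZMod n)}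
    (hσ : IsDigraphAut (nCay GV4 n (T6 n)) σ) (g : GV4) :
    ∃ u : GV4, σ (g, 1) = (u, 1) := by
  rcases hp : σ ((g, 1) : GV4 × ZMod n) with ⟨h, j⟩
  refine ⟨h, ?_⟩
  by_cases hj1 : j = 1
  · rw [hj1]
  exfalso
  obtain ⟨v, hv⟩ : ∃ v, IsDigon n ((h, j) : GV4 × ZMod n) v := by
    by_cases hj0 : j = 0
    · exact ⟨(h, -1), by rw [hj0]; exact (digon_zero hn).mpr ⟨rfl, rfl⟩⟩
    by_cases hj2 : j = 2
    · exact ⟨(h, 3), by rw [hj2]; exact (digon_two hn).mpr ⟨rfl, rfl⟩⟩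
    · exact ⟨(h, j + 1), (digon_mid hn hj0 hj1 hj2).mpr ⟨rfl, Or.inl rfl⟩⟩
  have := digon_pull hσ (u := (g,1)) (by rw [hp]; exact hv)
  exact digon_one hn this

private lemma layer_zero (hn : 3 ≤ n) {σ : Equiv.Perm (GV4 × ZMod n)}
    (hσ : IsDigraphAut (nCay GV4 n (T6 n)) σ) (g : GV4) :
    ∃ h : GV4, σ (g, 0) = (h, 0) ∨ σ (g, 0) = (h, 2) := by
  rcases hp : σ ((g, 0) : GV4 × ZMod n) with ⟨h, j⟩
  refine ⟨h, ?_⟩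
  by_cases hj0 : j = 0
  · exact Or.inl (by rw [hj0])
  by_cases hj2 : j = 2
  · exact Or.inr (by rw [hj2])
  exfalso
  by_cases hj1 : j = 1
  · have hd : IsDigon n (σ (g, 0)) (σ ((g, -1) : GV4 × ZMod n)) :=
      digon_map hσ ((digon_zero hn).mpr ⟨rfl, rfl⟩)
    rw [hp, hj1] at hd
    rcases hq : σ ((g, -1) : GV4 × ZMod n) with ⟨x, y⟩
    rw [hq] at hd
    exact digon_one hn hd
  · have d1 : IsDigon n ((h, j) : GV4 × ZMod n) (h, j + 1) :=
      (digon_mid hn hj0 hj1 hj2).mpr ⟨rfl, Or.inl rfl⟩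
    have d2 : IsDigon n ((h, j) : GV4 × ZMod n) (h, j - 1) :=
      (digon_mid hn hj0 hj1 hj2).mpr ⟨rfl, Or.inr rfl⟩
    have p1 := digon_pull hσ (u := (g,0)) (by rw [hp]; exact d1)
    have p2 := digon_pull hσ (u := (g,0)) (by rw [hp]; exact d2)
    rcases q1 : σ.symm ((h, j + 1) : GV4 × ZMod n) with ⟨x1, y1⟩
    rcases q2 : σ.symm ((h, j - 1) : GV4 × ZMod n) with ⟨x2, y2⟩
    rw [q1] at p1; rw [q2] at p2
    obtain ⟨rfl, rfl⟩ := (digon_zero hn).mp p1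
    obtain ⟨rfl, rfl⟩ := (digon_zero hn).mp p2
    have : ((h, j + 1) : GV4 × ZMod n) = (h, j - 1) := σ.symm.injective (q1.trans q2.symm)
    have h2 : j + 1 = j - 1 := congrArg Prod.snd this
    exact h20 hn (by linear_combination h2)

private lemma castn2 (hn : 3 ≤ n) : (((n - 2 : ℕ)) : ZMod n) = -2 := by
  have h2 : (n - 2) + 2 = n := by omega
  have h3 := congrArg (fun m : ℕ => (m : ZMod n)) h2
  push_cast at h3
  rw [ZMod.natCast_self] at h3
  linear_combination h3

private lemma hnd (hn : 3 ≤ n) {m : ℕ} (hm1 : 0 < m) (hm2 : m < n) : ((m : ZMod n) ≠ 0) := by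
  intro e
  rw [ZMod.natCast_eq_zero_iff] at e
  exact absurd (Nat.le_of_dvd hm1 e) (by omega)

private lemma chainA (hn : 3 ≤ n) {σ : Equiv.Perm (GV4 × ZMod n)}
    (hσ : IsDigraphAut (nCay GV4 n (T6 n)) σ) {g h : GV4}
    (h0 : σ (g, 0) = (h, 0)) :
    ∀ k : ℕ, k ≤ n - 2 → σ (g, -(k : ZMod n)) = (h, -(k : ZMod n)) := by
  intro k
  induction k using Nat.strong_induction_on with
  | _ k IH =>
  match k with
  | 0 => intro _; simpa using h0
  | 1 =>
    intro _
    have hd : IsDigon n (σ (g, 0)) (σ ((g, -1) : GV4 × ZMod n)) :=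
      digon_map hσ ((digon_zero hn).mpr ⟨rfl, rfl⟩)
    rw [h0] at hd
    rcases hq : σ ((g, -1) : GV4 × ZMod n) with ⟨x, y⟩
    rw [hq] at hd
    obtain ⟨rfl, rfl⟩ := (digon_zero hn).mp hd
    simpa using hq
  | (k+2) =>
    intro hk
    have e1 := IH (k+1) (by omega) (by omega)
    have e0 := IH k (by omega) (by omega)
    have hc1 : ((k : ZMod n) + 1) = ((k + 1 : ℕ) : ZMod n) := by push_cast; ring
    have hc2 : ((k : ZMod n) + 2) = ((k + 2 : ℕ) : ZMod n) := by push_cast; ring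
    have hc3 : ((k : ZMod n) + 3) = ((k + 3 : ℕ) : ZMod n) := by push_cast; ring
    set i : ZMod n := -((k : ZMod n) + 1) with hidef
    have hi0 : i ≠ 0 := by
      intro e
      have : ((k + 1 : ℕ) : ZMod n) = 0 := by rw [← hc1]; linear_combination -e
      exact hnd hn (by omega) (by omega) this
    have hi1 : i ≠ 1 := by
      intro e
      have : ((k + 2 : ℕ) : ZMod n) = 0 := by rw [← hc2]; linear_combination -e
      exact hnd hn (by omega) (by omega) this
    have hi2 : i ≠ 2 := by
      intro e
      have : ((k + 3 : ℕ) : ZMod n) = 0 := by rw [← hc3]; linear_combination -e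
      exact hnd hn (by omega) (by omega) this
    have e1' : σ (g, i) = (h, i) := by
      rw [hidef, hc1]; exact e1
    have hd : IsDigon n (σ (g, i)) (σ ((g, i - 1) : GV4 × ZMod n)) :=
      digon_map hσ ((digon_mid hn hi0 hi1 hi2).mpr ⟨rfl, Or.inr rfl⟩)
    rw [e1'] at hd
    rcases hq : σ ((g, i - 1) : GV4 × ZMod n) with ⟨x, y⟩
    rw [hq] at hd
    obtain ⟨rfl, hy⟩ := (digon_mid hn hi0 hi1 hi2).mp hd
    have goalcast : -(((k + 2 : ℕ)) : ZMod n) = i - 1 := by rw [← hc2, hidef]; ring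
    rcases hy with hy | hy
    · exfalso
      have h2 : y = -(k : ZMod n) := by rw [hy, hidef]; ring
      have hy' : σ ((g, i - 1) : GV4 × ZMod n) = (x, -(k : ZMod n)) := by rw [hq, h2]
      have hinj := σ.injective (hy'.trans e0.symm)
      have h3 : i - 1 = -(k : ZMod n) := congrArg Prod.snd hinj
      rw [hidef] at h3
      exact h20 hn (by linear_combination -h3)
    · rw [goalcast, hq, hy]

private lemma chainB (hn : 3 ≤ n) {σ : Equiv.Perm (GV4 × ZMod n)}
    (hσ : IsDigraphAut (nCay GV4 n (T6 n)) σ) {g h : GV4}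
    (h0 : σ (g, 0) = (h, 2)) :
    ∀ k : ℕ, k ≤ n - 2 → σ (g, -(k : ZMod n)) = (h, 2 + (k : ZMod n)) := by
  intro k
  induction k using Nat.strong_induction_on with
  | _ k IH =>
  match k with
  | 0 => intro _; simpa using h0
  | 1 =>
    intro _
    have hd : IsDigon n (σ (g, 0)) (σ ((g, -1) : GV4 × ZMod n)) :=
      digon_map hσ ((digon_zero hn).mpr ⟨rfl, rfl⟩)
    rw [h0] at hd
    rcases hq : σ ((g, -1) : GV4 × ZMod n) with ⟨x, y⟩
    rw [hq] at hd
    obtain ⟨rfl, rfl⟩ := (digon_two hn).mp hd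
    have : ((3 : ZMod n)) = 2 + ((1:ℕ) : ZMod n) := by push_cast; ring
    rw [← this]
    simpa using hq
  | (k+2) =>
    intro hk
    have e1 := IH (k+1) (by omega) (by omega)
    have e0 := IH k (by omega) (by omega)
    have hc1 : ((k : ZMod n) + 1) = ((k + 1 : ℕ) : ZMod n) := by push_cast; ring
    have hc2 : ((k : ZMod n) + 2) = ((k + 2 : ℕ) : ZMod n) := by push_cast; ring
    have hc3 : ((k : ZMod n) + 3) = ((k + 3 : ℕ) : ZMod n) := by push_cast; ring
    set i : ZMod n := -((k : ZMod n) + 1) with hidef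
    have hi0 : i ≠ 0 := by
      intro e
      have : ((k + 1 : ℕ) : ZMod n) = 0 := by rw [← hc1]; linear_combination -e
      exact hnd hn (by omega) (by omega) this
    have hi1 : i ≠ 1 := by
      intro e
      have : ((k + 2 : ℕ) : ZMod n) = 0 := by rw [← hc2]; linear_combination -e
      exact hnd hn (by omega) (by omega) this
    have hi2 : i ≠ 2 := by
      intro e
      have : ((k + 3 : ℕ) : ZMod n) = 0 := by rw [← hc3]; linear_combination -e
      exact hnd hn (by omega) (by omega) this
    set l : ZMod n := 2 + ((k : ZMod n) + 1) with hldef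
    have hl0 : l ≠ 0 := by
      intro e
      have : ((k + 3 : ℕ) : ZMod n) = 0 := by rw [← hc3]; linear_combination e
      exact hnd hn (by omega) (by omega) this
    have hl1 : l ≠ 1 := by
      intro e
      have : ((k + 2 : ℕ) : ZMod n) = 0 := by rw [← hc2]; linear_combination e
      exact hnd hn (by omega) (by omega) this
    have hl2 : l ≠ 2 := by
      intro e
      have : ((k + 1 : ℕ) : ZMod n) = 0 := by rw [← hc1]; linear_combination e
      exact hnd hn (by omega) (by omega) this
    have e1' : σ (g, i) = (h, l) := by
      rw [hidef, hldef, hc1]; exact e1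
    have hd : IsDigon n (σ (g, i)) (σ ((g, i - 1) : GV4 × ZMod n)) :=
      digon_map hσ ((digon_mid hn hi0 hi1 hi2).mpr ⟨rfl, Or.inr rfl⟩)
    rw [e1'] at hd
    rcases hq : σ ((g, i - 1) : GV4 × ZMod n) with ⟨x, y⟩
    rw [hq] at hd
    obtain ⟨rfl, hy⟩ := (digon_mid hn hl0 hl1 hl2).mp hd
    have goalcast : -(((k + 2 : ℕ)) : ZMod n) = i - 1 := by rw [← hc2, hidef]; ring
    rcases hy with hy | hy
    swap
    · exfalso
      have h2 : y = 2 + (k : ZMod n) := by rw [hy, hldef]; ring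
      have hy' : σ ((g, i - 1) : GV4 × ZMod n) = (x, 2 + (k : ZMod n)) := by rw [hq, h2]
      have hinj := σ.injective (hy'.trans e0.symm)
      have h3 : i - 1 = -(k : ZMod n) := congrArg Prod.snd hinj
      rw [hidef] at h3
      exact h20 hn (by linear_combination -h3)
    · have h2 : y = 2 + (((k + 2 : ℕ)) : ZMod n) := by rw [hy, hldef, ← hc2]; ring
      rw [goalcast, hq, h2]


private lemma rtransl_apply (c x : GV4) (i : ZMod n) : rtransl GV4 n c (x, i) = (x * c, i) := rfl

private lemma transl_aut (c : GV4) : IsDigraphAut (nCay GV4 n (T6 n)) (rtransl GV4 n c) := by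
  rintro ⟨x, i⟩ ⟨y, j⟩
  show (y * c) * (x * c)⁻¹ ∈ T6 n i j ↔ y * x⁻¹ ∈ T6 n i j
  have hyx : (y * c) * (x * c)⁻¹ = y * x⁻¹ := by group
  rw [hyx]

private lemma invswap {c x y : GV4} (hc : c * c = 1) (h : x = c * y) : y = c * x := by
  rw [h, ← mul_assoc, hc, one_mul]

private lemma aut_eq_transl (hn : 3 ≤ n) {σ : Equiv.Perm (GV4 × ZMod n)}
    (hσ : IsDigraphAut (nCay GV4 n (T6 n)) σ) : ∃ c : GV4, σ = rtransl GV4 n c := by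
  have e10 := h10 hn; have e20 := h20 hn; have e21 := h21 hn; have e31 := h31 hn
  have caseA : ∀ g : GV4, ∃ h : GV4, σ (g, 0) = (h, 0) := by
    intro g
    obtain ⟨h, hc⟩ := layer_zero hn hσ g
    rcases hc with hc | hc
    · exact ⟨h, hc⟩
    exfalso
    have hg2 : σ ((g, 2) : GV4 × ZMod n) = (h, 0) := by
      have hch := chainB hn hσ hc (n - 2) le_rfl
      rw [castn2 hn] at hch
      rw [show -(-2 : ZMod n) = 2 by ring, show (2 : ZMod n) + -2 = 0 by ring] at hch
      exact hch
    obtain ⟨u, hu⟩ := layer_one hn hσ g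
    obtain ⟨u', hu'⟩ := layer_one hn hσ (bV4 * g)
    have A1 : (nCay GV4 n (T6 n)).Adj (g, 0) (g, 1) :=
      (adj_iff hn).mpr (Or.inl ⟨rfl, Or.inr (Or.inr ⟨rfl, rfl⟩)⟩)
    have B1 := (hσ (g, 0) (g, 1)).mpr A1
    rw [hc, hu] at B1
    have hu_eq : u = aV4 * h := by
      rcases (adj_iff hn).mp B1 with ⟨he, (⟨e, _, _⟩ | ⟨_, _, e⟩ | ⟨e, _⟩)⟩ | ⟨he, _⟩ | ⟨_, e, _⟩
      · exact (e31 (by linear_combination -e)).elim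
      · exact (e rfl).elim
      · exact (e20 e).elim
      · exact he
      · exact (e21 e).elim
    have A2 : (nCay GV4 n (T6 n)).Adj (bV4 * g, 1) (g, 2) := by
      refine (adj_iff hn).mpr (Or.inr (Or.inr ⟨?_, rfl, rfl⟩))
      rw [← mul_assoc, show bV4 * bV4 = (1 : GV4) from by decide, one_mul]
    have B2 := (hσ _ _).mpr A2
    rw [hu', hg2] at B2
    have hu'_eq : h = aV4 * u' := by
      rcases (adj_iff hn).mp B2 with ⟨_, (⟨e, _, _⟩ | ⟨_, e, _⟩ | ⟨e, _⟩)⟩ | ⟨he, _⟩ | ⟨_, _, e⟩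
      · exact (e20 (by linear_combination -e)).elim
      · exact (e rfl).elim
      · exact (e10 e).elim
      · exact he
      · exact (e20 (by linear_combination -e)).elim
    have huu : u' = u := by
      rw [hu_eq, hu'_eq, ← mul_assoc, show aV4 * aV4 = (1 : GV4) from by decide, one_mul]
    have hσeq : σ ((bV4 * g, 1) : GV4 × ZMod n) = σ (g, 1) := by rw [hu, hu', huu]
    have hbg : bV4 * g = g := congrArg Prod.fst (σ.injective hσeq)
    exact absurd (mul_eq_right.mp hbg) (by decide)
  choose φ hφ using caseA
  haveI : NeZero n := ⟨by omega⟩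
  have hAll : ∀ (g : GV4) (i : ZMod n), i ≠ 1 → σ (g, i) = (φ g, i) := by
    intro g i hi
    have hcast : (((-i).val : ℕ) : ZMod n) = -i := ZMod.natCast_zmod_val (-i)
    have hlt : (-i).val < n := ZMod.val_lt (-i)
    have hne : (-i).val ≠ n - 1 := by
      intro e
      have hn1 : ((n - 1 : ℕ) : ZMod n) = -1 := by
        have h2 : (n - 1) + 1 = n := by omega
        have h3 := congrArg (fun m : ℕ => (m : ZMod n)) h2
        push_cast at h3
        rw [ZMod.natCast_self] at h3
        linear_combination h3
      rw [e, hn1] at hcast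
      exact hi (by linear_combination hcast)
    have hk2 : (-i).val ≤ n - 2 := by omega
    have hch := chainA hn hσ (hφ g) ((-i).val) hk2
    rw [hcast, neg_neg] at hch
    exact hch
  have hAllg : ∀ (g : GV4) (i : ZMod n), σ (g, i) = (φ g, i) := by
    intro g i
    by_cases hi : i = 1
    · subst hi
      obtain ⟨u, hu⟩ := layer_one hn hσ g
      have A1 : (nCay GV4 n (T6 n)).Adj (g, 0) (g, 1) :=
        (adj_iff hn).mpr (Or.inl ⟨rfl, Or.inr (Or.inr ⟨rfl, rfl⟩)⟩)
      have B1 := (hσ _ _).mpr A1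
      rw [hφ g, hu] at B1
      have hufin : u = φ g := by
        rcases (adj_iff hn).mp B1 with ⟨he, _⟩ | ⟨_, (⟨e, _⟩ | ⟨e, _⟩)⟩ | ⟨_, e, _⟩
        · exact he
        · exact (e10 e.symm).elim
        · exact (e20 (by linear_combination -e)).elim
        · exact (e10 e.symm).elim
      rw [hu, hufin]
    · exact hAll g i hi
  have hA : ∀ g : GV4, φ (aV4 * g) = aV4 * φ g := by
    intro g
    have A : (nCay GV4 n (T6 n)).Adj (g, 1) (aV4 * g, 0) :=
      (adj_iff hn).mpr (Or.inr (Or.inl ⟨rfl, Or.inl ⟨rfl, rfl⟩⟩))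
    have B := (hσ _ _).mpr A
    rw [hAllg g 1, hAllg (aV4 * g) 0] at B
    rcases (adj_iff hn).mp B with ⟨_, (⟨e, _, _⟩ | ⟨_, e, _⟩ | ⟨e, _⟩)⟩ | ⟨he, _⟩ | ⟨_, _, e⟩
    · exact (e20 (by linear_combination -e)).elim
    · exact (e rfl).elim
    · exact (e10 e).elim
    · exact he
    · exact (e20 (by linear_combination -e)).elim
  have hB : ∀ g : GV4, φ (bV4 * g) = bV4 * φ g := by
    intro g
    have A : (nCay GV4 n (T6 n)).Adj (g, 1) (bV4 * g, 2) :=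
      (adj_iff hn).mpr (Or.inr (Or.inr ⟨rfl, rfl, rfl⟩))
    have B := (hσ _ _).mpr A
    rw [hAllg g 1, hAllg (bV4 * g) 2] at B
    rcases (adj_iff hn).mp B with ⟨_, (⟨_, _, e⟩ | ⟨e, _, _⟩ | ⟨e, _⟩)⟩ | ⟨_, (⟨_, e⟩ | ⟨e, _⟩)⟩ | ⟨he, _⟩
    · exact (e rfl).elim
    · exact (e31 (by linear_combination -e)).elim
    · exact (e10 e).elim
    · exact (e20 e).elim
    · exact (e21 e.symm).elim
    · exact he
  have hφc : ∀ g : GV4, φ g = g * φ 1 := by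
    intro g
    have hcl : ∀ x : GV4, x = 1 ∨ x = aV4 ∨ x = bV4 ∨ x = aV4 * bV4 := by decide
    rcases hcl g with rfl | rfl | rfl | rfl
    · rw [one_mul]
    · have h1 := hA 1; rw [mul_one] at h1; exact h1
    · have h1 := hB 1; rw [mul_one] at h1; exact h1
    · have h1 := hB 1; rw [mul_one] at h1
      have h2 := hA bV4
      rw [h2, h1]
      exact (mul_assoc _ _ _).symm
  refine ⟨φ 1, Equiv.ext ?_⟩
  rintro ⟨g, i⟩
  rw [hAllg g i, hφc g, rtransl_apply]

private lemma out_set (hn : 3 ≤ n) (g : GV4) (i : ZMod n) :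
    {u | (nCay GV4 n (T6 n)).Adj (g, i) u} =
      {((if i = 1 then bV4 * g else g), i + 1),
       ((if i = 1 ∨ i = 2 then aV4 * g else g), i - 1)} := by
  have e10 := h10 hn; have e20 := h20 hn; have e21 := h21 hn; have e31 := h31 hn
  by_cases hi0 : i = 0
  · subst hi0
    rw [if_neg (show ¬(0 : ZMod n) = 1 from fun e => e10 e.symm),
      if_neg (show ¬((0 : ZMod n) = 1 ∨ (0 : ZMod n) = 2) from by
        rintro (e | e)
        · exact e10 e.symm
        · exact e20 (by linear_combination -e))]
    ext ⟨h, j⟩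
    simp only [Set.mem_setOf_eq, adj_iff hn, Set.mem_insert_iff, Set.mem_singleton_iff,
      Prod.mk.injEq]
    constructor
    · rintro (⟨rfl, (⟨_, e, _⟩ | ⟨e1, _, _⟩ | ⟨_, rfl⟩)⟩ | ⟨rfl, (⟨e, _⟩ | ⟨e, _⟩)⟩ | ⟨rfl, e, _⟩)
      · exact (e rfl).elim
      · exact Or.inr ⟨rfl, by linear_combination -e1⟩
      · exact Or.inl ⟨rfl, by ring⟩
      · exact (e10 e.symm).elim
      · exact (e20 (by linear_combination -e)).elim
      · exact (e10 e.symm).elim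
    · rintro (⟨rfl, rfl⟩ | ⟨rfl, rfl⟩)
      · exact Or.inl ⟨rfl, Or.inr (Or.inr ⟨trivial, by ring⟩)⟩
      · exact Or.inl ⟨rfl, Or.inr (Or.inl ⟨by ring,
          fun e => e10 (by linear_combination -e), fun e => e20 (by linear_combination -e)⟩)⟩
  by_cases hi1 : i = 1
  · subst hi1
    rw [if_pos rfl, if_pos (Or.inl rfl)]
    ext ⟨h, j⟩
    simp only [Set.mem_setOf_eq, adj_iff hn, Set.mem_insert_iff, Set.mem_singleton_iff,
      Prod.mk.injEq]
    constructor
    · rintro (⟨rfl, (⟨_, _, e⟩ | ⟨e, e', _⟩ | ⟨e, _⟩)⟩ | ⟨rfl, (⟨_, rfl⟩ | ⟨e, _⟩)⟩ | ⟨rfl, _, rfl⟩)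
      · exact (e rfl).elim
      · exact (e' (by linear_combination -e)).elim
      · exact (e10 e).elim
      · exact Or.inr ⟨rfl, by ring⟩
      · exact (e21 e.symm).elim
      · exact Or.inl ⟨rfl, by ring⟩
    · rintro (⟨rfl, rfl⟩ | ⟨rfl, rfl⟩)
      · exact Or.inr (Or.inr ⟨rfl, trivial, by ring⟩)
      · exact Or.inr (Or.inl ⟨rfl, Or.inl ⟨trivial, by ring⟩⟩)
  by_cases hi2 : i = 2
  · subst hi2
    rw [if_neg (show ¬(2 : ZMod n) = 1 from e21), if_pos (Or.inr rfl)]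
    ext ⟨h, j⟩
    simp only [Set.mem_setOf_eq, adj_iff hn, Set.mem_insert_iff, Set.mem_singleton_iff,
      Prod.mk.injEq]
    constructor
    · rintro (⟨rfl, (⟨e, _, _⟩ | ⟨e, _, e''⟩ | ⟨e, _⟩)⟩ | ⟨rfl, (⟨e, _⟩ | ⟨_, rfl⟩)⟩ | ⟨rfl, e, _⟩)
      · exact Or.inl ⟨rfl, e⟩
      · exact (e'' (by linear_combination -e)).elim
      · exact (e20 e).elim
      · exact (e21 e).elim
      · exact Or.inr ⟨rfl, by ring⟩
      · exact (e21 e).elim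
    · rintro (⟨rfl, rfl⟩ | ⟨rfl, rfl⟩)
      · exact Or.inl ⟨rfl, Or.inl ⟨rfl, e20, e21⟩⟩
      · exact Or.inr (Or.inl ⟨rfl, Or.inr ⟨trivial, by ring⟩⟩)
  · rw [if_neg hi1, if_neg (show ¬(i = 1 ∨ i = 2) from by rintro (e | e) <;> [exact hi1 e; exact hi2 e])]
    ext ⟨h, j⟩
    simp only [Set.mem_setOf_eq, adj_iff hn, Set.mem_insert_iff, Set.mem_singleton_iff,
      Prod.mk.injEq]
    constructor
    · rintro (⟨rfl, (⟨e, _, _⟩ | ⟨e, _, _⟩ | ⟨e, _⟩)⟩ | ⟨rfl, (⟨e, _⟩ | ⟨e, _⟩)⟩ | ⟨rfl, e, _⟩)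
      · exact Or.inl ⟨rfl, e⟩
      · exact Or.inr ⟨rfl, by linear_combination -e⟩
      · exact (hi0 e).elim
      · exact (hi1 e).elim
      · exact (hi2 e).elim
      · exact (hi1 e).elim
    · rintro (⟨rfl, rfl⟩ | ⟨rfl, rfl⟩)
      · exact Or.inl ⟨rfl, Or.inl ⟨rfl, hi0, hi1⟩⟩
      · exact Or.inl ⟨rfl, Or.inr (Or.inl ⟨by ring,
          fun e => hi1 (by linear_combination e), fun e => hi2 (by linear_combination e)⟩)⟩

private lemma in_set (hn : 3 ≤ n) (g : GV4) (i : ZMod n) :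
    {u | (nCay GV4 n (T6 n)).Adj u (g, i)} =
      {((if i = 2 then bV4 * g else g), i - 1),
       ((if i = 0 ∨ i = 1 then aV4 * g else g), i + 1)} := by
  have e10 := h10 hn; have e20 := h20 hn; have e21 := h21 hn; have e31 := h31 hn
  have haa : aV4 * aV4 = 1 := by decide
  have hbb : bV4 * bV4 = 1 := by decide
  by_cases hi0 : i = 0
  · subst hi0
    rw [if_neg (show ¬(0 : ZMod n) = 2 from fun e => e20 e.symm), if_pos (Or.inl rfl)]
    ext ⟨h, j⟩
    simp only [Set.mem_setOf_eq, adj_iff hn, Set.mem_insert_iff, Set.mem_singleton_iff,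
      Prod.mk.injEq]
    constructor
    · rintro (⟨e', (⟨e, _, _⟩ | ⟨_, e, _⟩ | ⟨_, e⟩)⟩ | ⟨e', (⟨rfl, _⟩ | ⟨_, e⟩)⟩ | ⟨_, _, e⟩)
      · exact Or.inl ⟨e'.symm, by linear_combination -e⟩
      · exact (e rfl).elim
      · exact (e10 e.symm).elim
      · exact Or.inr ⟨invswap haa e', by ring⟩
      · exact (e10 e.symm).elim
      · exact (e20 (by linear_combination -e)).elim
    · rintro (⟨rfl, rfl⟩ | ⟨rfl, rfl⟩)
      · exact Or.inl ⟨rfl, Or.inl ⟨by ring,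
          fun e => e10 (by linear_combination -e), fun e => e20 (by linear_combination -e)⟩⟩
      · exact Or.inr (Or.inl ⟨by rw [← mul_assoc, haa, one_mul], Or.inl ⟨by ring, trivial⟩⟩)
  by_cases hi1 : i = 1
  · subst hi1
    rw [if_neg (show ¬(1 : ZMod n) = 2 from fun e => e21 e.symm), if_pos (Or.inr rfl)]
    ext ⟨h, j⟩
    simp only [Set.mem_setOf_eq, adj_iff hn, Set.mem_insert_iff, Set.mem_singleton_iff,
      Prod.mk.injEq]
    constructor
    · rintro (⟨e', (⟨e, e'', _⟩ | ⟨_, _, e⟩ | ⟨rfl, _⟩)⟩ | ⟨e', (⟨_, e⟩ | ⟨rfl, _⟩)⟩ | ⟨_, _, e⟩)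
      · exact (e'' (by linear_combination -e)).elim
      · exact (e rfl).elim
      · exact Or.inl ⟨e'.symm, by ring⟩
      · exact (e10 e).elim
      · exact Or.inr ⟨invswap haa e', by ring⟩
      · exact (e21 e.symm).elim
    · rintro (⟨rfl, rfl⟩ | ⟨rfl, rfl⟩)
      · exact Or.inl ⟨rfl, Or.inr (Or.inr ⟨by ring, trivial⟩)⟩
      · exact Or.inr (Or.inl ⟨by rw [← mul_assoc, haa, one_mul], Or.inr ⟨by ring, trivial⟩⟩)
  by_cases hi2 : i = 2
  · subst hi2
    rw [if_pos rfl, if_neg (show ¬((2 : ZMod n) = 0 ∨ (2 : ZMod n) = 1) from by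
      rintro (e | e)
      · exact e20 e
      · exact e21 e)]
    ext ⟨h, j⟩
    simp only [Set.mem_setOf_eq, adj_iff hn, Set.mem_insert_iff, Set.mem_singleton_iff,
      Prod.mk.injEq]
    constructor
    · rintro (⟨e', (⟨e, _, e''⟩ | ⟨e, _, _⟩ | ⟨_, e⟩)⟩ | ⟨_, (⟨_, e⟩ | ⟨_, e⟩)⟩ | ⟨e', rfl, _⟩)
      · exact (e'' (by linear_combination -e)).elim
      · exact Or.inr ⟨e'.symm, e⟩
      · exact (e21 e).elim
      · exact (e20 e).elim
      · exact (e21 e).elim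
      · exact Or.inl ⟨invswap hbb e', by ring⟩
    · rintro (⟨rfl, rfl⟩ | ⟨rfl, rfl⟩)
      · exact Or.inr (Or.inr ⟨by rw [← mul_assoc, hbb, one_mul], by ring, trivial⟩)
      · exact Or.inl ⟨rfl, Or.inr (Or.inl ⟨rfl, e20, e21⟩)⟩
  · rw [if_neg hi2, if_neg (show ¬(i = 0 ∨ i = 1) from by rintro (e | e) <;> [exact hi0 e; exact hi1 e])]
    ext ⟨h, j⟩
    simp only [Set.mem_setOf_eq, adj_iff hn, Set.mem_insert_iff, Set.mem_singleton_iff,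
      Prod.mk.injEq]
    constructor
    · rintro (⟨e', (⟨e, _, _⟩ | ⟨e, _, _⟩ | ⟨_, e⟩)⟩ | ⟨_, (⟨_, e⟩ | ⟨_, e⟩)⟩ | ⟨_, _, e⟩)
      · exact Or.inl ⟨e'.symm, by linear_combination -e⟩
      · exact Or.inr ⟨e'.symm, e⟩
      · exact (hi1 e).elim
      · exact (hi0 e).elim
      · exact (hi1 e).elim
      · exact (hi2 e).elim
    · rintro (⟨rfl, rfl⟩ | ⟨rfl, rfl⟩)
      · exact Or.inl ⟨rfl, Or.inl ⟨by ring,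
          fun e => hi1 (by linear_combination e), fun e => hi2 (by linear_combination e)⟩⟩
      · exact Or.inl ⟨rfl, Or.inr (Or.inl ⟨rfl, hi0, hi1⟩)⟩

end S6Aux



/-- for `n ≥ 3` the automorphism group of the digraph above is exactly
the group of right translations by `ℤ/2ℤ × ℤ/2ℤ`, which therefore admits an
`n`-partite digraphical representation for every `n ≥ 3`. -/
theorem statement6 (n : ℕ) (hn : 3 ≤ n) :
    (∀ σ : Equiv.Perm (GV4 × ZMod n),
       IsDigraphAut (nCay GV4 n (T6 n)) σ ↔ ∃ g : GV4, σ = rtransl GV4 n g) ∧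
    IsNPDR GV4 n (nCay GV4 n (T6 n)) := by
  haveI : NeZero n := ⟨by omega⟩
  have e20 := h20 hn; have e10 := h10 hn
  have main : ∀ σ : Equiv.Perm (GV4 × ZMod n),
      IsDigraphAut (nCay GV4 n (T6 n)) σ ↔ ∃ g : GV4, σ = rtransl GV4 n g := by
    intro σ
    constructor
    · exact fun hσ => aut_eq_transl hn hσ
    · rintro ⟨g, rfl⟩; exact transl_aut g
  refine ⟨main, ?_, ?_, ?_, ?_, ?_⟩
  · -- regularity
    refine ⟨2, ?_⟩
    rintro ⟨g, i⟩
    constructor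
    · rw [out_set hn g i]
      refine Set.ncard_pair ?_
      intro e
      rw [Prod.mk.injEq] at e
      exact e20 (by linear_combination e.2)
    · rw [in_set hn g i]
      refine Set.ncard_pair ?_
      intro e
      rw [Prod.mk.injEq] at e
      exact e20 (by linear_combination -e.2)
  · -- the isomorphism with the automorphism group
    refine ⟨{ toFun := fun g => ⟨rtransl GV4 n g, transl_aut g⟩,
              invFun := fun σp => ((σp : Equiv.Perm (GV4 × ZMod n)) (1, 0)).1,
              left_inv := ?_, right_inv := ?_, map_mul' := ?_ }⟩
    · intro g
      show ((1 : GV4) * g, (0 : ZMod n)).1 = g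
      exact one_mul g
    · rintro ⟨σp, hmem⟩
      obtain ⟨c, rfl⟩ := aut_eq_transl hn hmem
      apply Subtype.ext
      show rtransl GV4 n ((rtransl GV4 n c (1, 0)).1) = rtransl GV4 n c
      rw [rtransl_apply, one_mul]
    · intro g h
      apply Subtype.ext
      apply Equiv.ext
      rintro ⟨x, i⟩
      show (x * (g * h), i) = ((x * h) * g, i)
      rw [mul_comm g h, mul_assoc]
  · -- semiregularity
    rintro σp hmem v hfix
    obtain ⟨c, rfl⟩ := aut_eq_transl hn hmem
    obtain ⟨x, i⟩ := v
    rw [rtransl_apply, Prod.mk.injEq] at hfix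
    have hc : c = 1 := mul_left_cancel (hfix.1.trans (mul_one x).symm)
    subst hc
    apply Equiv.ext
    rintro ⟨y, j⟩
    show (y * 1, j) = (y, j)
    rw [mul_one]
  · -- the partition into orbits
    refine ⟨fun v => ⟨(v.2).val, ZMod.val_lt v.2⟩, ?_, ?_⟩
    · rintro ⟨k, hk⟩
      refine ⟨((1 : GV4), ((k : ℕ) : ZMod n)), ?_⟩
      apply Fin.ext
      show (((k : ℕ) : ZMod n)).val = k
      rw [ZMod.val_natCast, Nat.mod_eq_of_lt hk]
    · rintro ⟨u1, u2⟩ ⟨v1, v2⟩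
      constructor
      · intro he
        have hval : u2.val = v2.val := congrArg Fin.val he
        have h2 : u2 = v2 := ZMod.val_injective n hval
        refine ⟨rtransl GV4 n (u1⁻¹ * v1), transl_aut _, ?_⟩
        rw [rtransl_apply, mul_inv_cancel_left, h2]
      · rintro ⟨σp, hmem, he⟩
        obtain ⟨c, rfl⟩ := aut_eq_transl hn hmem
        rw [rtransl_apply, Prod.mk.injEq] at he
        apply Fin.ext
        show u2.val = v2.val
        rw [he.2]
  · -- orbits are independent sets
    rintro ⟨u1, u2⟩ ⟨v1, v2⟩ ⟨σp, hmem, he⟩ hadj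
    obtain ⟨c, rfl⟩ := aut_eq_transl hn hmem
    rw [rtransl_apply, Prod.mk.injEq] at he
    have h2 : u2 = v2 := he.2
    subst h2
    rcases (adj_iff hn).mp hadj with
      ⟨_, (⟨e, _, _⟩ | ⟨e, _, _⟩ | ⟨e1, e2⟩)⟩ | ⟨_, (⟨e1, e2⟩ | ⟨e1, e2⟩)⟩ | ⟨_, e1, e2⟩
    · exact e10 (by linear_combination -e)
    · exact e10 (by linear_combination -e)
    · exact e10 (by linear_combination e1 - e2)
    · exact e10 (by linear_combination e2 - e1)
    · exact e10 (by linear_combination e2 - e1)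
    · exact e10 (by linear_combination e1 - e2)

end PDR
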